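/- Assume 0 ≤ Q ≤ 3. Then for all ξ, η ∈ ℝ²: Re A(ξ+iη) + 8 A(η) = ((3−Q)/3) p₁² + ((3−Q)/3) p₂² + (Q/3)(p₁ + p₂)² + (4Q/3) p₃², where p₁ = √α (ξ₁² − 3η₁²), p₂ = √γ (ξ₂² − 3η₂²), p₃ = (αγ)^{1/4}(ξ₁ξ₂ − 3η₁η₂). In particular, since all the coefficients on the right-hand side are nonnegative, Re A(ξ+iη) ≥ −8 A(η). -/

import Mathlib

noncomputable section

/-- `A(η) = α η₁⁴ + 2β η₁²η₂² + γ η₂⁴` for `η ∈ ℝ²`. -/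
def Asym (a b c : ℝ) (η : ℝ × ℝ) : ℝ :=
  a * η.1 ^ 4 + 2 * b * η.1 ^ 2 * η.2 ^ 2 + c * η.2 ^ 4

/-- `A(z) = α z₁⁴ + 2β z₁²z₂² + γ z₂⁴` for `z ∈ ℂ²`. -/
def AsymC (a b c : ℝ) (z : ℂ × ℂ) : ℂ :=
  (a : ℂ) * z.1 ^ 4 + 2 * (b : ℂ) * z.1 ^ 2 * z.2 ^ 2 + (c : ℂ) * z.2 ^ 4

/-- `ξ + iη ∈ ℂ²` for `ξ, η ∈ ℝ²`. -/
def plusI (ξ η : ℝ × ℝ) : ℂ × ℂ :=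
  ((ξ.1 : ℂ) + Complex.I * (η.1 : ℂ), (ξ.2 : ℂ) + Complex.I * (η.2 : ℂ))

end

lemma asymC_re (a b c : ℝ) (ξ η : ℝ × ℝ) :
    (AsymC a b c (plusI ξ η)).re =
      a * (ξ.1 ^ 4 - 6 * ξ.1 ^ 2 * η.1 ^ 2 + η.1 ^ 4)
        + 2 * b * ((ξ.1 ^ 2 - η.1 ^ 2) * (ξ.2 ^ 2 - η.2 ^ 2) - 4 * ξ.1 * η.1 * ξ.2 * η.2)
        + c * (ξ.2 ^ 4 - 6 * ξ.2 ^ 2 * η.2 ^ 2 + η.2 ^ 4) := by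
  simp [AsymC, plusI, Complex.mul_re, Complex.add_re, Complex.add_im, Complex.mul_im, pow_succ]
  ring

/-- for `0 ≤ Q ≤ 3`, the identity
`Re A(ξ+iη) + 8A(η) = ((3−Q)/3)p₁² + ((3−Q)/3)p₂² + (Q/3)(p₁+p₂)² + (4Q/3)p₃²`
holds; in particular `Re A(ξ+iη) ≥ −8A(η)`. -/
theorem stmt9 (a b c Qv : ℝ) (ha : 0 < a) (hc : 0 < c)
    (hQ : Qv = b / Real.sqrt (a * c)) (hQ0 : 0 ≤ Qv) (hQ3 : Qv ≤ 3) :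
    (∀ ξ η : ℝ × ℝ,
      (AsymC a b c (plusI ξ η)).re + 8 * Asym a b c η =
        (3 - Qv) / 3 * (Real.sqrt a * (ξ.1 ^ 2 - 3 * η.1 ^ 2)) ^ 2
        + (3 - Qv) / 3 * (Real.sqrt c * (ξ.2 ^ 2 - 3 * η.2 ^ 2)) ^ 2
        + Qv / 3 * (Real.sqrt a * (ξ.1 ^ 2 - 3 * η.1 ^ 2)
            + Real.sqrt c * (ξ.2 ^ 2 - 3 * η.2 ^ 2)) ^ 2
        + 4 * Qv / 3 * ((a * c) ^ ((1 : ℝ) / 4) * (ξ.1 * ξ.2 - 3 * η.1 * η.2)) ^ 2) ∧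
    ∀ ξ η : ℝ × ℝ,
      (AsymC a b c (plusI ξ η)).re ≥ -8 * Asym a b c η := by
  set s := Real.sqrt a with hs
  set t := Real.sqrt c with ht
  set u := (a * c) ^ ((1 : ℝ) / 4) with hu
  have hs2 : s ^ 2 = a := Real.sq_sqrt ha.le
  have ht2 : t ^ 2 = c := Real.sq_sqrt hc.le
  have hst : Real.sqrt (a * c) = s * t := Real.sqrt_mul ha.le c
  have hstpos : 0 < s * t := by
    rw [← hst]; exact Real.sqrt_pos.mpr (mul_pos ha hc)
  have hu2 : u ^ 2 = s * t := by
    rw [hu, ← Real.rpow_natCast (((a*c))^((1:ℝ)/4)) 2, ← Real.rpow_mul (mul_pos ha hc).le]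
    norm_num
    rw [← hst, ← Real.sqrt_eq_rpow]
  have hb : b = Qv * (s * t) := by
    rw [hQ, hst]; field_simp
    rw [mul_assoc, mul_div_assoc, div_self hstpos.ne', mul_one]
  have key : ∀ ξ η : ℝ × ℝ,
      (AsymC a b c (plusI ξ η)).re + 8 * Asym a b c η =
        (3 - Qv) / 3 * (s * (ξ.1 ^ 2 - 3 * η.1 ^ 2)) ^ 2
        + (3 - Qv) / 3 * (t * (ξ.2 ^ 2 - 3 * η.2 ^ 2)) ^ 2
        + Qv / 3 * (s * (ξ.1 ^ 2 - 3 * η.1 ^ 2) + t * (ξ.2 ^ 2 - 3 * η.2 ^ 2)) ^ 2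
        + 4 * Qv / 3 * (u * (ξ.1 * ξ.2 - 3 * η.1 * η.2)) ^ 2 := by
    intro ξ η
    rw [asymC_re, Asym, hb, ← hs2, ← ht2, mul_pow u, hu2]
    ring
  refine ⟨key, fun ξ η => ?_⟩
  have h := key ξ η
  nlinarith [sq_nonneg (s * (ξ.1 ^ 2 - 3 * η.1 ^ 2)), sq_nonneg (t * (ξ.2 ^ 2 - 3 * η.2 ^ 2)),
    sq_nonneg (s * (ξ.1 ^ 2 - 3 * η.1 ^ 2) + t * (ξ.2 ^ 2 - 3 * η.2 ^ 2)),
    sq_nonneg (u * (ξ.1 * ξ.2 - 3 * η.1 * η.2))]
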